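/- Let U ∈ U(N) be a unitary matrix, and let f : T → T be a map on the diagonal unitary matrices that is equivariant under permutation of diagonal entries. If D ∈ T commutes with a matrix A ∈ U(N), then A also commutes with f(D). -/

import Mathlib

open Matrix

private theorem starPerm_aux {N : ℕ} (σ : Equiv.Perm (Fin N)) :
    star (σ.permMatrix ℂ) = (σ⁻¹).permMatrix ℂ := by
  ext i j
  simp only [Equiv.Perm.permMatrix, star_apply, PEquiv.toMatrix_apply,
    Equiv.toPEquiv_apply, Equiv.Perm.inv_def, Option.mem_def, Option.some.injEq]
  by_cases h : i = σ j
  · subst h; simp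
  · rw [if_neg (Ne.symm h), if_neg]
    · simp
    · exact fun e => h (by rw [← e, Equiv.apply_symm_apply])

private theorem permConj_aux {N : ℕ} (σ : Equiv.Perm (Fin N)) (M : Matrix (Fin N) (Fin N) ℂ)
    (i j : Fin N) :
    (σ.permMatrix ℂ * M * star (σ.permMatrix ℂ)) i j = M (σ i) (σ j) := by
  rw [starPerm_aux, Equiv.Perm.permMatrix, Equiv.Perm.permMatrix,
    PEquiv.toMatrix_toPEquiv_mul, PEquiv.mul_toMatrix_toPEquiv]
  simp [Equiv.Perm.inv_def]


/-- Let `T` be the subgroup of diagonal matrices in `U(N)` and let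
`f : T → T` (here: a map on matrices sending diagonal unitaries to diagonal
unitaries) be equivariant under permutation of the diagonal entries,
implemented by conjugation with permutation matrices.  If a diagonal unitary
`D` commutes with a unitary matrix `A`, then `A` also commutes with `f D`. -/
theorem commutes_with_image_of_perm_equivariant
    {N : ℕ} (f : Matrix (Fin N) (Fin N) ℂ → Matrix (Fin N) (Fin N) ℂ)
    (hfT : ∀ D : Matrix (Fin N) (Fin N) ℂ, D.IsDiag → D ∈ Matrix.unitaryGroup (Fin N) ℂ →
      (f D).IsDiag ∧ f D ∈ Matrix.unitaryGroup (Fin N) ℂ)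
    (hequiv : ∀ (σ : Equiv.Perm (Fin N)) (D : Matrix (Fin N) (Fin N) ℂ),
      D.IsDiag → D ∈ Matrix.unitaryGroup (Fin N) ℂ →
      f (σ.permMatrix ℂ * D * star (σ.permMatrix ℂ)) =
        σ.permMatrix ℂ * f D * star (σ.permMatrix ℂ))
    (D A : Matrix (Fin N) (Fin N) ℂ)
    (hD : D.IsDiag) (hDu : D ∈ Matrix.unitaryGroup (Fin N) ℂ)
    (hA : A ∈ Matrix.unitaryGroup (Fin N) ℂ)
    (hcomm : A * D = D * A) :
    A * f D = f D * A := by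
  obtain ⟨hEd, -⟩ := hfT D hD hDu
  have key : ∀ i j : Fin N, D i i = D j j → f D i i = f D j j := by
    intro i j hij
    set σ := Equiv.swap i j with hσ
    have hfix : σ.permMatrix ℂ * D * star (σ.permMatrix ℂ) = D := by
      ext a b
      rw [permConj_aux]
      by_cases hab : a = b
      · subst hab
        by_cases hai : a = i
        · subst hai; simp [hσ, Equiv.swap_apply_left, hij.symm]
        · by_cases haj : a = j
          · subst haj; simp [hσ, Equiv.swap_apply_right, hij]
          · simp [hσ, Equiv.swap_apply_of_ne_of_ne hai haj]
      · rw [hD hab, hD (fun h => hab (σ.injective h))]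
    have h2 := hequiv σ D hD hDu
    rw [hfix] at h2
    have := congrFun (congrFun h2 i) i
    rw [permConj_aux] at this
    simpa [hσ, Equiv.swap_apply_left] using this
  ext i j
  rw [← hEd.diagonal_diag, mul_diagonal, diagonal_mul]
  by_cases hz : A i j = 0
  · simp [hz]
  · have h1 := congrFun (congrFun hcomm i) j
    rw [← hD.diagonal_diag, mul_diagonal, diagonal_mul] at h1
    have hij : D i i = D j j := by
      rcases (by simpa [mul_comm] using h1.symm : D i i = D j j ∨ A i j = 0) with h | h
      · exact h
      · exact absurd h hz
    simp [Matrix.diag, key i j hij, mul_comm]
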